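/- Let (Ω, 𝒜) be a measurable space and X : Ω → ℝ a measurable function. Suppose that for every probability measure μ on Ω, one has ∫⁻ ω, ENNReal.ofReal (X ω) ∂μ < ∞ or ∫⁻ ω, ENNReal.ofReal (−X ω) ∂μ < ∞. Then X is bounded above (there exists C with X ω ≤ C for all ω) or X is bounded below (there exists C with C ≤ X ω for all ω). -/

import Mathlib

open MeasureTheory ENNReal

theorem stmt11 {Ω : Type*} [MeasurableSpace Ω] (X : Ω → ℝ) (hX : Measurable X)
    (h : ∀ μ : Measure Ω, IsProbabilityMeasure μ →
      (∫⁻ ω, ENNReal.ofReal (X ω) ∂μ < ⊤ ∨ ∫⁻ ω, ENNReal.ofReal (-X ω) ∂μ < ⊤)) :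
    (∃ C : ℝ, ∀ ω, X ω ≤ C) ∨ (∃ C : ℝ, ∀ ω, C ≤ X ω) := by
  by_contra hcon
  push_neg at hcon
  obtain ⟨hub, hlb⟩ := hcon
  choose a ha using fun n : ℕ => hub ((2:ℝ)^(n+1))
  choose b hb using fun n : ℕ => hlb (-(2:ℝ)^(n+1))
  set w : ℕ → ℝ≥0∞ := fun n => ((2:ℝ≥0∞)⁻¹)^(n+2) with hw
  set μ : Measure Ω :=
    Measure.sum (fun n : ℕ => w n • (Measure.dirac (a n) + Measure.dirac (b n))) with hμ
  have h2 : ((2:ℝ≥0∞))⁻¹ * 2 = 1 := ENNReal.inv_mul_cancel (by norm_num) (by norm_num)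
  have hwsum : ∑' n : ℕ, w n * 2 = 1 := by
    have : ∀ n : ℕ, w n * 2 = ((2:ℝ≥0∞)⁻¹)^(n+1) := by
      intro n
      show ((2:ℝ≥0∞)⁻¹)^(n+2) * 2 = ((2:ℝ≥0∞)⁻¹)^(n+1)
      rw [pow_succ ((2:ℝ≥0∞)⁻¹) (n+1), mul_assoc, h2, mul_one]
    rw [tsum_congr this]
    have := ENNReal.tsum_geometric ((2:ℝ≥0∞)⁻¹)
    have hsub : (1 - (2:ℝ≥0∞)⁻¹) = 2⁻¹ := by
      rw [ENNReal.sub_eq_of_eq_add (by norm_num)]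
      rw [← two_mul, ENNReal.mul_inv_cancel (by norm_num) (by norm_num)]
    rw [hsub, inv_inv] at this
    calc ∑' n : ℕ, ((2:ℝ≥0∞)⁻¹)^(n+1)
        = ∑' n : ℕ, (2:ℝ≥0∞)⁻¹ * ((2:ℝ≥0∞)⁻¹)^n := by
          exact tsum_congr fun n => by rw [pow_succ, mul_comm]
      _ = (2:ℝ≥0∞)⁻¹ * ∑' n : ℕ, ((2:ℝ≥0∞)⁻¹)^n := ENNReal.tsum_mul_left
      _ = 1 := by rw [this, h2]
  have hprob : IsProbabilityMeasure μ := by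
    constructor
    rw [hμ, Measure.sum_apply _ MeasurableSet.univ]
    simpa [mul_two] using hwsum
  -- key: lintegral over μ of any measurable f is the weighted sum
  have hlin : ∀ f : Ω → ℝ≥0∞, Measurable f →
      ∫⁻ ω, f ω ∂μ = ∑' n : ℕ, w n * (f (a n) + f (b n)) := by
    intro f hf
    rw [hμ, lintegral_sum_measure]
    refine tsum_congr fun n => ?_
    rw [lintegral_smul_measure, lintegral_add_measure, lintegral_dirac' _ hf,
      lintegral_dirac' _ hf, smul_eq_mul]
  have hkey : ∀ n : ℕ, w n * (2:ℝ≥0∞)^(n+1) = 2⁻¹ := by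
    intro n
    show ((2:ℝ≥0∞)⁻¹)^(n+2) * (2:ℝ≥0∞)^(n+1) = 2⁻¹
    calc ((2:ℝ≥0∞)⁻¹)^(n+2) * (2:ℝ≥0∞)^(n+1)
        = 2⁻¹ * (((2:ℝ≥0∞)⁻¹ * 2)^(n+1)) := by rw [mul_pow, pow_succ]; ring
      _ = 2⁻¹ := by rw [h2, one_pow, mul_one]
  have hofpow : ∀ n : ℕ, ENNReal.ofReal ((2:ℝ)^(n+1)) = (2:ℝ≥0∞)^(n+1) := by
    intro n
    rw [ENNReal.ofReal_pow (by norm_num)]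
    norm_num
  -- bound both integrals below by ⊤
  have hpos : ∫⁻ ω, ENNReal.ofReal (X ω) ∂μ = ⊤ := by
    rw [hlin _ (hX.ennreal_ofReal)]
    refine top_unique ?_
    calc (⊤:ℝ≥0∞) = ∑' _ : ℕ, (2:ℝ≥0∞)⁻¹ :=
          (ENNReal.tsum_const_eq_top_of_ne_zero (by norm_num)).symm
      _ ≤ ∑' n : ℕ, w n * (ENNReal.ofReal (X (a n)) + ENNReal.ofReal (X (b n))) := by
          refine ENNReal.tsum_le_tsum fun n => ?_
          calc (2:ℝ≥0∞)⁻¹ = w n * (2:ℝ≥0∞)^(n+1) := (hkey n).symm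
            _ ≤ w n * (ENNReal.ofReal (X (a n)) + ENNReal.ofReal (X (b n))) := by
                refine mul_le_mul_right ?_ _
                refine le_add_right ?_
                rw [← hofpow n]
                exact ENNReal.ofReal_le_ofReal (ha n).le
  have hneg : ∫⁻ ω, ENNReal.ofReal (-X ω) ∂μ = ⊤ := by
    rw [hlin (fun ω => ENNReal.ofReal (-X ω)) (hX.neg.ennreal_ofReal)]
    refine top_unique ?_
    calc (⊤:ℝ≥0∞) = ∑' _ : ℕ, (2:ℝ≥0∞)⁻¹ :=
          (ENNReal.tsum_const_eq_top_of_ne_zero (by norm_num)).symm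
      _ ≤ ∑' n : ℕ, w n * (ENNReal.ofReal (-X (a n)) + ENNReal.ofReal (-X (b n))) := by
          refine ENNReal.tsum_le_tsum fun n => ?_
          calc (2:ℝ≥0∞)⁻¹ = w n * (2:ℝ≥0∞)^(n+1) := (hkey n).symm
            _ ≤ w n * (ENNReal.ofReal (-X (a n)) + ENNReal.ofReal (-X (b n))) := by
                refine mul_le_mul_right ?_ _
                refine le_add_left ?_
                rw [← hofpow n]
                refine ENNReal.ofReal_le_ofReal ?_
                linarith [hb n]
  rcases h μ hprob with h1 | h1
  · rw [hpos] at h1; exact absurd h1 (lt_irrefl _)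
  · rw [hneg] at h1; exact absurd h1 (lt_irrefl _)
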